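/- Let X be a scheme with effective Cartier divisors D₁ and D₂, and suppose s₁ (resp. s₂) is a stable Frobenius splitting of X along D₁ (resp. D₂) of degree e₁ (resp. e₂), each compatibly splitting a closed subscheme Y. Then there exists a stable Frobenius splitting of X along D₁ + D₂ of degree e₁ + e₂ which compatibly splits Y. -/
import Mathlib


/-- (Affine model: an effective Cartier divisor `Dᵢ` on
`X = Spec R` is given by a regular element `dᵢ ∈ R`, a stable Frobenius
splitting of `X` along `Dᵢ` of degree `eᵢ` is an additive, `p^{eᵢ}`-semilinear
map `sᵢ : R → R` with `sᵢ(dᵢ) = 1`, and `sᵢ` compatibly splits the closed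
subscheme `Y` with ideal `I` if no irreducible component of `Y` lies in the
support of `Dᵢ` — i.e. `dᵢ` avoids every minimal prime over `I` — and
`sᵢ(I) ⊆ I` under the trivialization of `O_X(Dᵢ)` by `dᵢ`.)

If `s₁` (resp. `s₂`) is a stable Frobenius splitting of `X` along `D₁`
(resp. `D₂`) of degree `e₁` (resp. `e₂`), each compatibly splitting the closed
subscheme `Y`, then there exists a stable Frobenius splitting of `X` along
`D₁ + D₂` (given by `d₁ ⬝ d₂`) of degree `e₁ + e₂` compatibly splitting `Y`. -/
theorem stmt_6 (p e₁ e₂ : ℕ) (hp : p.Prime) (R : Type*) [CommRing R] [CharP R p]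
    (d₁ d₂ : R) (hd₁ : d₁ ∈ nonZeroDivisors R) (hd₂ : d₂ ∈ nonZeroDivisors R)
    (I : Ideal R) (s₁ s₂ : R → R)
    (hadd₁ : ∀ a b : R, s₁ (a + b) = s₁ a + s₁ b)
    (hsemi₁ : ∀ a b : R, s₁ (a ^ p ^ e₁ * b) = a * s₁ b)
    (hcan₁ : s₁ d₁ = 1)
    (hsupp₁ : ∀ P ∈ I.minimalPrimes, d₁ ∉ P)
    (hcomp₁ : ∀ a ∈ I, s₁ a ∈ I)
    (hadd₂ : ∀ a b : R, s₂ (a + b) = s₂ a + s₂ b)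
    (hsemi₂ : ∀ a b : R, s₂ (a ^ p ^ e₂ * b) = a * s₂ b)
    (hcan₂ : s₂ d₂ = 1)
    (hsupp₂ : ∀ P ∈ I.minimalPrimes, d₂ ∉ P)
    (hcomp₂ : ∀ a ∈ I, s₂ a ∈ I) :
    ∃ s : R → R, (∀ a b : R, s (a + b) = s a + s b) ∧
      (∀ a b : R, s (a ^ p ^ (e₁ + e₂) * b) = a * s b) ∧
      s (d₁ * d₂) = 1 ∧
      (∀ P ∈ I.minimalPrimes, d₁ * d₂ ∉ P) ∧
      (∀ a ∈ I, s a ∈ I) := by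
  refine ⟨fun a => s₁ (s₂ (d₁ ^ (p ^ e₂ - 1) * a)), ?_, ?_, ?_, ?_, ?_⟩
  · intro a b
    dsimp only
    rw [mul_add, hadd₂, hadd₁]
  · intro a b
    have h : d₁ ^ (p ^ e₂ - 1) * (a ^ p ^ (e₁ + e₂) * b)
        = (a ^ p ^ e₁) ^ p ^ e₂ * (d₁ ^ (p ^ e₂ - 1) * b) := by
      rw [← pow_mul, ← pow_add]; ring
    dsimp only
    rw [h, hsemi₂, hsemi₁]
  · have h1 : 1 ≤ p ^ e₂ := Nat.one_le_pow _ _ hp.pos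
    have h : d₁ ^ (p ^ e₂ - 1) * (d₁ * d₂) = d₁ ^ p ^ e₂ * d₂ := by
      rw [← mul_assoc, ← pow_succ, Nat.sub_add_cancel h1]
    dsimp only
    rw [h, hsemi₂, hcan₂, mul_one, hcan₁]
  · intro P hP
    have hPp : P.IsPrime := hP.1.1
    intro h
    rcases hPp.mul_mem_iff_mem_or_mem.mp h with h1 | h2
    · exact hsupp₁ P hP h1
    · exact hsupp₂ P hP h2
  · intro a ha
    exact hcomp₁ _ (hcomp₂ _ (I.mul_mem_left _ ha))
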